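/- arXiv:2109.03844 — 4 statements merged into one kernel-verified Lean document; each statement's English description precedes it below -/
import Mathlib

section
/- For all α > 0, β > 0 and λ ∈ ℝ, the integral over (0,∞) of Φ(λ a(y;α,β)) φ(a(y;α,β)) a'(y;α,β) with respect to y equals 1/2. (Equivalently, E[w(T)] = 1/2 for the weight w(y) = Φ(λ a(y;α,β)) and T distributed with the BS(α,β) density, so the skew-BS density f(y;α,β,λ) = w(y) f_T(y;α,β) / E[w(T)] integrates to 1.) -/
open Real MeasureTheory Set

/-- Standard normal PDF. -/
noncomputable def stdPhi (x : ℝ) : ℝ := (Real.sqrt (2 * Real.pi))⁻¹ * Real.exp (-x ^ 2 / 2)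

/-- Standard normal CDF. -/
noncomputable def stdPhiCDF (x : ℝ) : ℝ := ∫ t in Set.Iic x, stdPhi t

lemma stdPhi_nonneg (x : ℝ) : 0 ≤ stdPhi x := by
  unfold stdPhi; positivity

lemma stdPhi_neg (x : ℝ) : stdPhi (-x) = stdPhi x := by
  unfold stdPhi; ring_nf

lemma stdPhi_eq (x : ℝ) : stdPhi x = (Real.sqrt (2 * π))⁻¹ * Real.exp (-(1/2) * x ^ 2) := by
  unfold stdPhi
  rw [show -x ^ 2 / 2 = -(1/2) * x ^ 2 by ring]

lemma continuous_stdPhi : Continuous stdPhi := by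
  unfold stdPhi; fun_prop

lemma integrable_stdPhi : Integrable stdPhi := by
  rw [show stdPhi = fun x => (Real.sqrt (2 * π))⁻¹ * Real.exp (-(1/2) * x ^ 2) from
    funext stdPhi_eq]
  exact (integrable_exp_neg_mul_sq (by norm_num : (0:ℝ) < 1/2)).const_mul _

lemma integral_stdPhi : ∫ x, stdPhi x = 1 := by
  simp_rw [stdPhi_eq]
  rw [integral_const_mul, integral_gaussian]
  rw [show (π / (1/2 : ℝ)) = 2 * π by ring]
  have : Real.sqrt (2 * π) ≠ 0 := by positivity
  field_simp

lemma stdPhiCDF_nonneg (x : ℝ) : 0 ≤ stdPhiCDF x :=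
  setIntegral_nonneg measurableSet_Iic fun t _ => stdPhi_nonneg t

lemma stdPhiCDF_add_neg (x : ℝ) : stdPhiCDF x + stdPhiCDF (-x) = 1 := by
  have h : stdPhiCDF (-x) = ∫ t in Ioi x, stdPhi t := by
    rw [stdPhiCDF, show Ioi x = Ioi (- -x) by rw [neg_neg], ← integral_comp_neg_Iic]
    simp_rw [stdPhi_neg]
  rw [stdPhiCDF, h,
    intervalIntegral.integral_Iic_add_Ioi integrable_stdPhi.integrableOn integrable_stdPhi.integrableOn,
    integral_stdPhi]

lemma stdPhiCDF_le_one (x : ℝ) : stdPhiCDF x ≤ 1 := by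
  have := stdPhiCDF_add_neg x
  have := stdPhiCDF_nonneg (-x)
  linarith

lemma monotone_stdPhiCDF : Monotone stdPhiCDF := fun a b hab =>
  setIntegral_mono_set integrable_stdPhi.integrableOn
    (ae_of_all _ fun t => stdPhi_nonneg t) (HasSubset.Subset.eventuallyLE (Iic_subset_Iic.mpr hab))

lemma measurable_stdPhiCDF : Measurable stdPhiCDF := monotone_stdPhiCDF.measurable

lemma integral_cdf_mul_pdf (lam : ℝ) :
    ∫ x : ℝ, stdPhiCDF (lam * x) * stdPhi x = 1 / 2 := by
  set g : ℝ → ℝ := fun x => stdPhiCDF (lam * x) * stdPhi x with hgdef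
  have hmeas : AEStronglyMeasurable g (volume : Measure ℝ) :=
    ((measurable_stdPhiCDF.comp (measurable_const_mul lam)).mul
      continuous_stdPhi.measurable).aestronglyMeasurable
  have hbound : ∀ x, ‖g x‖ ≤ stdPhi x := by
    intro x
    rw [Real.norm_eq_abs, abs_mul, abs_of_nonneg (stdPhiCDF_nonneg _),
      abs_of_nonneg (stdPhi_nonneg _)]
    calc stdPhiCDF (lam * x) * stdPhi x ≤ 1 * stdPhi x :=
          mul_le_mul_of_nonneg_right (stdPhiCDF_le_one _) (stdPhi_nonneg _)
      _ = stdPhi x := one_mul _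
  have hg : Integrable g := Integrable.mono' integrable_stdPhi hmeas (ae_of_all _ hbound)
  have hgneg : Integrable (fun x => g (-x)) := hg.comp_neg
  have hneg : ∫ x, g (-x) = ∫ x, g x := integral_neg_eq_self g volume
  have hsum : ∀ x, g x + g (-x) = stdPhi x := by
    intro x
    simp only [hgdef, mul_neg, stdPhi_neg]
    have h1 := stdPhiCDF_add_neg (lam * x)
    nlinarith [stdPhi_nonneg x]
  have htot : (∫ x, g x) + (∫ x, g (-x)) = 1 := by
    rw [← integral_add hg hgneg]
    simp_rw [hsum]
    exact integral_stdPhi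
  rw [hneg] at htot
  linarith

/-- The function a(y; α, β). -/
noncomputable def aBS (α β y : ℝ) : ℝ := (1 / α) * (Real.sqrt (y / β) - Real.sqrt (β / y))

/-- The derivative a'(y; α, β). -/
noncomputable def aBS' (α β y : ℝ) : ℝ :=
  (1 / (2 * α * y)) * (Real.sqrt (y / β) + Real.sqrt (β / y))

lemma aBS'_pos {α β : ℝ} (hα : 0 < α) (hβ : 0 < β) {y : ℝ} (hy : 0 < y) : 0 < aBS' α β y := by
  unfold aBS'
  have h1 : 0 < Real.sqrt (y / β) := Real.sqrt_pos.mpr (div_pos hy hβ)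
  have h2 : 0 ≤ Real.sqrt (β / y) := Real.sqrt_nonneg _
  positivity

lemma aBS_hasDerivAt {α β : ℝ} (hα : 0 < α) (hβ : 0 < β) {y : ℝ} (hy : 0 < y) :
    HasDerivAt (aBS α β) (aBS' α β y) y := by
  have hyβ : 0 < y / β := div_pos hy hβ
  have hβy : 0 < β / y := div_pos hβ hy
  set u := Real.sqrt (y / β) with hu
  set v := Real.sqrt (β / y) with hv
  have hu0 : 0 < u := Real.sqrt_pos.mpr hyβ
  have hv0 : 0 < v := Real.sqrt_pos.mpr hβy
  have hu2 : u ^ 2 = y / β := Real.sq_sqrt hyβ.le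
  have hv2 : v ^ 2 = β / y := Real.sq_sqrt hβy.le
  have h1 : HasDerivAt (fun y => Real.sqrt (y / β)) (1 / (2 * u) * (1 / β)) y := by
    have := (Real.hasDerivAt_sqrt hyβ.ne').comp y ((hasDerivAt_id y).div_const β)
    exact this
  have h2 : HasDerivAt (fun y => Real.sqrt (β / y)) (1 / (2 * v) * (β * (-(y ^ 2)⁻¹))) y := by
    have hinv : HasDerivAt (fun y : ℝ => β / y) (β * (-(y ^ 2)⁻¹)) y := by
      simpa [div_eq_mul_inv] using (hasDerivAt_inv hy.ne').const_mul β
    have := (Real.hasDerivAt_sqrt hβy.ne').comp y hinv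
    exact this
  have h := ((h1.sub h2).const_mul (1 / α))
  refine h.congr_deriv ?_
  symm
  unfold aBS'
  rw [← hu, ← hv]
  have hβ' : (β : ℝ) ≠ 0 := hβ.ne'
  have hy' : (y : ℝ) ≠ 0 := hy.ne'
  have e1 : u ^ 2 * β = y := by rw [hu2]; field_simp
  have e2 : v ^ 2 * y = β := by rw [hv2]; field_simp
  field_simp
  linear_combination (y*v) * e1 + (u*β) * e2

lemma aBS_strictMonoOn {α β : ℝ} (hα : 0 < α) (hβ : 0 < β) :
    StrictMonoOn (aBS α β) (Ioi 0) := by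
  intro a ha b hb hab
  simp only [mem_Ioi] at ha hb
  unfold aBS
  apply mul_lt_mul_of_pos_left _ (one_div_pos.mpr hα)
  have h1 : Real.sqrt (a / β) < Real.sqrt (b / β) :=
    Real.sqrt_lt_sqrt (by positivity) (by apply div_lt_div_of_pos_right hab hβ)
  have h2 : Real.sqrt (β / b) < Real.sqrt (β / a) :=
    Real.sqrt_lt_sqrt (by positivity) (by apply div_lt_div_of_pos_left hβ ha hab)
  linarith

lemma aBS_image {α β : ℝ} (hα : 0 < α) (hβ : 0 < β) :
    aBS α β '' Ioi 0 = univ := by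
  apply eq_univ_of_forall
  intro x
  set c := α * x with hc
  set s := Real.sqrt (c ^ 2 + 4) with hs
  have hs2 : s ^ 2 = c ^ 2 + 4 := Real.sq_sqrt (by positivity)
  have hs0 : 0 ≤ s := Real.sqrt_nonneg _
  have habs : |c| < s := by nlinarith [sq_abs c, abs_nonneg c]
  set u := (c + s) / 2 with hudef
  have hu0 : 0 < u := by
    have := neg_abs_le c
    simp only [hudef]
    linarith
  have key : u * u = c * u + 1 := by
    simp only [hudef]
    field_simp
    nlinarith [hs2]
  refine ⟨β * u ^ 2, mem_Ioi.mpr (by positivity), ?_⟩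
  have h1 : β * u ^ 2 / β = u ^ 2 := by field_simp
  have h2 : β / (β * u ^ 2) = (u⁻¹) ^ 2 := by
    rw [inv_pow]
    field_simp
  unfold aBS
  rw [h1, h2, Real.sqrt_sq hu0.le, Real.sqrt_sq (by positivity)]
  have hcu : u - u⁻¹ = c := by
    field_simp
    linarith [key]
  rw [hcu, hc]
  field_simp

/-- ∫_{(0,∞)} Φ(λ a(y;α,β)) φ(a(y;α,β)) a'(y;α,β) dy = 1/2, so that the
skew-BS density 2 φ(a) Φ(λ a) a' integrates to one. -/
theorem skewBS_weight_integral (α β lam : ℝ) (hα : 0 < α) (hβ : 0 < β) :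
    ∫ y in Set.Ioi (0 : ℝ),
      stdPhiCDF (lam * aBS α β y) * stdPhi (aBS α β y) * aBS' α β y = 1 / 2 := by
  set g : ℝ → ℝ := fun x => stdPhiCDF (lam * x) * stdPhi x with hgdef
  have hderiv : ∀ y ∈ Ioi (0:ℝ), HasDerivWithinAt (aBS α β) (aBS' α β y) (Ioi 0) y :=
    fun y hy => (aBS_hasDerivAt hα hβ hy).hasDerivWithinAt
  have hinj : InjOn (aBS α β) (Ioi 0) := (aBS_strictMonoOn hα hβ).injOn
  have hcv := integral_image_eq_integral_abs_deriv_smul measurableSet_Ioi hderiv hinj g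
  rw [aBS_image hα hβ, Measure.restrict_univ] at hcv
  calc ∫ y in Ioi (0:ℝ), stdPhiCDF (lam * aBS α β y) * stdPhi (aBS α β y) * aBS' α β y
      = ∫ y in Ioi (0:ℝ), |aBS' α β y| • g (aBS α β y) := by
        apply setIntegral_congr_fun measurableSet_Ioi
        intro y hy
        simp only [hgdef, smul_eq_mul]
        rw [abs_of_pos (aBS'_pos hα hβ hy)]
        ring
    _ = ∫ x, g x := hcv.symm
    _ = 1 / 2 := integral_cdf_mul_pdf lam
end

section
/- Fix α > 0, β > 0, λ ∈ ℝ and q ∈ (0,1). If Q ∈ ℝ satisfies ∫_{−∞}^{Q} 2 φ(x) Φ(λ x) dx = q (i.e., Q is the 100q-th quantile of the skew-normal SN(λ) distribution), then the number Ξ_q = (β/4)(αQ + √((αQ)² + 4))² satisfies ∫_0^{Ξ_q} f(y;α,β,λ) dy = q; that is, Ξ_q is the 100q-th quantile of the skew-BS(α,β,λ) distribution. -/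
open Real MeasureTheory Set

/-- The skew-BS(α, β, λ) density. -/
noncomputable def skewBSpdf (α β lam y : ℝ) : ℝ :=
  2 * stdPhi (aBS α β y) * stdPhiCDF (lam * aBS α β y) * aBS' α β y

noncomputable def gmap (α β x : ℝ) : ℝ := (β / 4) * (α * x + Real.sqrt ((α * x) ^ 2 + 4)) ^ 2

lemma s_pos (α x : ℝ) : 0 < α * x + Real.sqrt ((α * x) ^ 2 + 4) := by
  have h1 : |α * x| < Real.sqrt ((α * x) ^ 2 + 4) := by
    rw [← Real.sqrt_sq_eq_abs]
    exact Real.sqrt_lt_sqrt (sq_nonneg _) (by linarith)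
  have := abs_lt.mp h1
  linarith [this.1]

lemma s_sq (α x : ℝ) : (Real.sqrt ((α * x) ^ 2 + 4)) ^ 2 = (α * x) ^ 2 + 4 :=
  Real.sq_sqrt (by positivity)

lemma gmap_pos {α β : ℝ} (hβ : 0 < β) (x : ℝ) : 0 < gmap α β x := by
  have := s_pos α x
  unfold gmap; positivity

lemma sqrt_gmap_div {α β : ℝ} (hβ : 0 < β) (x : ℝ) :
    Real.sqrt (gmap α β x / β) = (α * x + Real.sqrt ((α * x) ^ 2 + 4)) / 2 := by
  have h : gmap α β x / β = ((α * x + Real.sqrt ((α * x) ^ 2 + 4)) / 2) ^ 2 := by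
    unfold gmap; field_simp; ring
  rw [h, Real.sqrt_sq (by linarith [s_pos α x])]

lemma sqrt_div_gmap {α β : ℝ} (hβ : 0 < β) (x : ℝ) :
    Real.sqrt (β / gmap α β x) = 2 / (α * x + Real.sqrt ((α * x) ^ 2 + 4)) := by
  have hs := s_pos α x
  have h : β / gmap α β x = (2 / (α * x + Real.sqrt ((α * x) ^ 2 + 4))) ^ 2 := by
    unfold gmap; field_simp; ring
  rw [h, Real.sqrt_sq (by positivity)]

lemma aBS_gmap {α β : ℝ} (hα : 0 < α) (hβ : 0 < β) (x : ℝ) :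
    aBS α β (gmap α β x) = x := by
  have hs := s_pos α x
  have hq := s_sq α x
  unfold aBS
  rw [sqrt_gmap_div hβ, sqrt_div_gmap hβ]
  have h1 : (α * x + Real.sqrt ((α * x) ^ 2 + 4)) / 2 - 2 / (α * x + Real.sqrt ((α * x) ^ 2 + 4))
      = α * x := by
    rw [div_sub_div _ _ two_ne_zero hs.ne', div_eq_iff (by positivity)]
    linear_combination hq
  rw [h1, one_div, inv_mul_cancel_left₀ hα.ne']

lemma aBS'_gmap {α β : ℝ} (hα : 0 < α) (hβ : 0 < β) (x : ℝ) :
    aBS' α β (gmap α β x) * (α * β / 2 * (α * x + Real.sqrt ((α * x) ^ 2 + 4)) ^ 2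
      / Real.sqrt ((α * x) ^ 2 + 4)) = 1 := by
  have hs := s_pos α x
  have hq := s_sq α x
  have hsp : 0 < Real.sqrt ((α * x) ^ 2 + 4) := Real.sqrt_pos.mpr (by positivity)
  have hg := gmap_pos (α := α) hβ x
  unfold aBS'
  rw [sqrt_gmap_div hβ, sqrt_div_gmap hβ]
  have h1 : (α * x + Real.sqrt ((α * x) ^ 2 + 4)) / 2 + 2 / (α * x + Real.sqrt ((α * x) ^ 2 + 4))
      = Real.sqrt ((α * x) ^ 2 + 4) := by
    rw [div_add_div _ _ two_ne_zero hs.ne', div_eq_iff (by positivity)]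
    linear_combination -hq
  rw [h1]
  unfold gmap
  generalize Real.sqrt ((α * x) ^ 2 + 4) = r at hs hsp ⊢
  field_simp [hs.ne']
  norm_num

lemma hasDerivAt_gmap {α β : ℝ} (hα : 0 < α) (x : ℝ) :
    HasDerivAt (gmap α β)
      (α * β / 2 * (α * x + Real.sqrt ((α * x) ^ 2 + 4)) ^ 2
        / Real.sqrt ((α * x) ^ 2 + 4)) x := by
  have hsp : (0:ℝ) < (α * x) ^ 2 + 4 := by positivity
  have hsq : 0 < Real.sqrt ((α * x) ^ 2 + 4) := Real.sqrt_pos.mpr hsp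
  have h1 : HasDerivAt (fun x : ℝ => (α * x) ^ 2 + 4) (2 * (α * x) * α) x := by
    have := ((hasDerivAt_id x).const_mul α).pow 2
    simpa [mul_comm] using this.add_const 4
  have h2 := (Real.hasDerivAt_sqrt (ne_of_gt hsp)).comp x h1
  have h3 := (((hasDerivAt_id x).const_mul α).add h2)
  have h4 := (h3.pow 2).const_mul (β / 4)
  simp only [id_eq, Function.comp_def, Pi.add_apply, Pi.pow_apply, Nat.cast_ofNat] at h4
  have heq : gmap α β = fun x : ℝ => (β / 4) * (α * x + Real.sqrt ((α * x) ^ 2 + 4)) ^ 2 := rfl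
  rw [heq]
  refine h4.congr_deriv ?_
  have hq := s_sq α x
  field_simp
  ring_nf

lemma gmap_mono {α β : ℝ} (hα : 0 < α) (hβ : 0 < β) : StrictMono (gmap α β) := by
  apply strictMono_of_deriv_pos
  intro x
  rw [(hasDerivAt_gmap (β := β) hα x).deriv]
  have hs := s_pos α x
  have hsq : 0 < Real.sqrt ((α * x) ^ 2 + 4) := Real.sqrt_pos.mpr (by positivity)
  positivity

lemma gmap_aBS {α β : ℝ} (hα : 0 < α) (hβ : 0 < β) {y : ℝ} (hy : 0 < y) :
    gmap α β (aBS α β y) = y := by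
  set u := Real.sqrt (y / β) with hu
  have hu0 : 0 < u := Real.sqrt_pos.mpr (by positivity)
  have hu2 : u ^ 2 = y / β := Real.sq_sqrt (by positivity)
  have hby : Real.sqrt (β / y) = u⁻¹ := by
    rw [show β / y = (y / β)⁻¹ by field_simp, Real.sqrt_inv]
  have hax : α * aBS α β y = u - u⁻¹ := by
    have hyy : Real.sqrt y = Real.sqrt β * u := by
      rw [hu, Real.sqrt_div hy.le]; field_simp
    unfold aBS; rw [hby]; field_simp; rw [← hu]; ring
  have hsq : (α * aBS α β y) ^ 2 + 4 = (u + u⁻¹) ^ 2 := by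
    rw [hax]; field_simp; ring
  have : Real.sqrt ((α * aBS α β y) ^ 2 + 4) = u + u⁻¹ := by
    rw [hsq, Real.sqrt_sq (by positivity)]
  unfold gmap
  rw [this, hax]
  have : u - u⁻¹ + (u + u⁻¹) = 2 * u := by ring
  rw [this]
  have : (β / 4) * (2 * u) ^ 2 = β * u ^ 2 := by ring
  rw [this, hu2]
  field_simp

lemma gmap_image {α β : ℝ} (hα : 0 < α) (hβ : 0 < β) (Q : ℝ) :
    gmap α β '' Set.Iic Q = Set.Ioc 0 (gmap α β Q) := by
  ext y
  constructor
  · rintro ⟨x, hx, rfl⟩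
    exact ⟨gmap_pos hβ x, (gmap_mono hα hβ).monotone hx⟩
  · rintro ⟨hy0, hyQ⟩
    refine ⟨aBS α β y, ?_, gmap_aBS hα hβ hy0⟩
    have := (gmap_mono hα hβ).le_iff_le (a := aBS α β y) (b := Q)
    rw [Set.mem_Iic, ← this, gmap_aBS hα hβ hy0]
    exact hyQ


/-- if Q is the 100q-th quantile of the skew-normal SN(λ) distribution,
then Ξ_q = (β/4)(αQ + √((αQ)² + 4))² is the 100q-th quantile of the skew-BS(α,β,λ)
distribution. -/
theorem skewBS_quantile (α β lam q Q : ℝ) (hα : 0 < α) (hβ : 0 < β)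
    (hq₁ : 0 < q) (hq₂ : q < 1)
    (hQ : ∫ x in Set.Iic Q, 2 * stdPhi x * stdPhiCDF (lam * x) = q) :
    ∫ y in Set.Ioc (0 : ℝ) ((β / 4) * (α * Q + Real.sqrt ((α * Q) ^ 2 + 4)) ^ 2),
      skewBSpdf α β lam y = q := by
  have himg : Set.Ioc (0 : ℝ) ((β / 4) * (α * Q + Real.sqrt ((α * Q) ^ 2 + 4)) ^ 2)
      = gmap α β '' Set.Iic Q := (gmap_image hα hβ Q).symm
  rw [himg]
  rw [MeasureTheory.integral_image_eq_integral_abs_deriv_smul measurableSet_Iic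
    (fun x _ => (hasDerivAt_gmap (β := β) hα x).hasDerivWithinAt)
    ((gmap_mono hα hβ).injective.injOn) _]
  rw [← hQ]
  apply MeasureTheory.setIntegral_congr_fun measurableSet_Iic
  intro x _
  have hd : 0 < α * β / 2 * (α * x + Real.sqrt ((α * x) ^ 2 + 4)) ^ 2
      / Real.sqrt ((α * x) ^ 2 + 4) := by
    have hs := s_pos α x
    have hsq : 0 < Real.sqrt ((α * x) ^ 2 + 4) := Real.sqrt_pos.mpr (by positivity)
    positivity
  simp only [smul_eq_mul, abs_of_pos hd]
  unfold skewBSpdf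
  rw [aBS_gmap hα hβ]
  have := aBS'_gmap hα hβ x
  linear_combination (2 * stdPhi x * stdPhiCDF (lam * x)) * this
end

section
/- (Reciprocal property, Proposition on skew-QBS properties, item 2.) For all α > 0, β > 0, λ ∈ ℝ and y > 0, (1/y²) f(1/y; α, β, λ) = f(y; α, 1/β, −λ). Consequently, if Y has the skew-BS(α,β,λ) density then Y⁻¹ has the skew-BS(α,β⁻¹,−λ) density; in the quantile parameterization, if Y ∼ skew-QBS(α,Ξ_q,λ) then Y⁻¹ ∼ skew-QBS(α,Ξ_q⁻¹,−λ). -/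
open Real MeasureTheory Set

/-- reciprocal property: for all α, β > 0, λ ∈ ℝ and y > 0,
(1/y²) f(1/y; α, β, λ) = f(y; α, 1/β, −λ); i.e. if Y ∼ skew-BS(α,β,λ) then
Y⁻¹ ∼ skew-BS(α,β⁻¹,−λ) (equivalently, skew-QBS(α,Ξ_q⁻¹,−λ)). -/
theorem skewBS_reciprocal (α β lam y : ℝ) (hα : 0 < α) (hβ : 0 < β) (hy : 0 < y) :
    (1 / y ^ 2) * skewBSpdf α β lam (1 / y) = skewBSpdf α β⁻¹ (-lam) y := by
  have e1 : (1/y)/β = (y*β)⁻¹ := by field_simp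
  have e2 : β/(1/y) = y*β := by field_simp
  have e3 : y/β⁻¹ = y*β := by field_simp
  have e4 : β⁻¹/y = (y*β)⁻¹ := by field_simp
  have h1 : aBS α β (1/y) = -aBS α β⁻¹ y := by
    unfold aBS
    rw [e1, e2, e3, e4, Real.sqrt_inv]
    ring
  have h2 : (1 / y ^ 2) * aBS' α β (1/y) = aBS' α β⁻¹ y := by
    unfold aBS'
    rw [e1, e2, e3, e4]
    field_simp
    ring
  have h3 : stdPhi (aBS α β (1/y)) = stdPhi (aBS α β⁻¹ y) := by
    rw [h1]; unfold stdPhi; rw [neg_pow]; norm_num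
  unfold skewBSpdf
  rw [h3, h1, mul_neg, ← neg_mul, ← h2]
  ring
end

section
/- (Proposition 1, item 2: dispersion index inequality for the skew-QBS ACD model.) Let (ε_j)_{j ≥ 0} be independent, identically distributed nonnegative random variables with 0 < E[ε_1] < ∞ and E[ε_1²] < ∞, let c ∈ ℝ, and let (θ_j)_{j ≥ 1} be nonnegative reals such that both infinite products ∏_{j=1}^∞ E[e^{θ_j ε_1}] and ∏_{j=1}^∞ E[e^{2θ_j ε_1}] converge to finite positive limits. Define Y = ε_0 · e^c · ∏_{j=1}^∞ e^{θ_j ε_j}. Then E[Y²]/(E[Y])² = ( E[ε_1²]/(E[ε_1])² ) · ∏_{j=1}^∞ E[e^{2θ_j ε_1}] / ( ∏_{j=1}^∞ E[e^{θ_j ε_1}] )², and this quantity is ≥ E[ε_1²]/(E[ε_1])²; equivalently, writing 1 + δ_Y² = E[Y²]/(E[Y])² and 1 + δ² = E[ε_1²]/(E[ε_1])², one has 1 + δ_Y² = (1 + δ²) · ∏_j E[e^{2θ_j ε_1}]/(∏_j E[e^{θ_j ε_1}])² ≥ 1 + δ², so the dispersion (coefficient of variation) of the durations Y is at least that of the innovations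 ε. -/
open Real MeasureTheory Set ProbabilityTheory
open scoped ENNReal

lemma acd_tprod_eq_iSup (f : ℕ → ℝ≥0∞) (hf : ∀ j, 1 ≤ f j) :
    ∏' j, f j = ⨆ n, ∏ j ∈ Finset.range n, f j := by
  have hmono : Monotone fun s : Finset ℕ => ∏ i ∈ s, f i := fun s t hst =>
    Finset.prod_le_prod_of_subset_of_one_le' hst fun i _ _ => hf i
  have hhas : HasProd f (⨆ s : Finset ℕ, ∏ i ∈ s, f i) := tendsto_atTop_iSup hmono
  rw [hhas.tprod_eq]
  refine le_antisymm (iSup_le fun s => ?_)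
    (iSup_le fun n => le_iSup_of_le (Finset.range n) le_rfl)
  obtain ⟨n, hn⟩ := s.exists_nat_subset_range
  exact le_iSup_of_le n (hmono hn)

lemma acd_mono_range (f : ℕ → ℝ≥0∞) (hf : ∀ j, 1 ≤ f j) :
    Monotone fun n => ∏ j ∈ Finset.range n, f j := fun m n h =>
  Finset.prod_le_prod_of_subset_of_one_le' (Finset.range_subset_range.2 h) fun i _ _ => hf i

lemma acd_iSup_mul_self (P : ℕ → ℝ≥0∞) (hP : Monotone P) :
    (⨆ n, P n) * (⨆ n, P n) = ⨆ n, P n * P n := by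
  rw [ENNReal.iSup_mul]
  refine le_antisymm (iSup_le fun n => ?_)
    (iSup_le fun n => le_iSup_of_le n (mul_le_mul' le_rfl (le_iSup P n)))
  rw [ENNReal.mul_iSup]
  exact iSup_le fun m =>
    le_iSup_of_le (max n m) (mul_le_mul' (hP (le_max_left n m)) (hP (le_max_right n m)))

lemma acd_tprod_sq (f : ℕ → ℝ≥0∞) (hf : ∀ j, 1 ≤ f j) :
    (∏' j, f j) ^ 2 = ∏' j, f j ^ 2 := by
  have hf2 : ∀ j, 1 ≤ f j ^ 2 := fun j => one_le_pow_of_one_le' (hf j) 2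
  rw [acd_tprod_eq_iSup f hf, acd_tprod_eq_iSup _ hf2, pow_two,
    acd_iSup_mul_self _ (acd_mono_range f hf)]
  exact iSup_congr fun n => by rw [← pow_two, ← Finset.prod_pow]

lemma acd_tprod_le (f g : ℕ → ℝ≥0∞) (hf : ∀ j, 1 ≤ f j) (hg : ∀ j, 1 ≤ g j)
    (h : ∀ j, f j ≤ g j) : ∏' j, f j ≤ ∏' j, g j := by
  rw [acd_tprod_eq_iSup f hf, acd_tprod_eq_iSup g hg]
  exact iSup_mono fun n => Finset.prod_le_prod' fun i _ => h i

lemma acd_cs {Ω : Type*} [MeasurableSpace Ω] (μ : Measure Ω) [IsProbabilityMeasure μ]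
    {f : Ω → ℝ≥0∞} (hf : AEMeasurable f μ) :
    (∫⁻ ω, f ω ∂μ) ^ 2 ≤ ∫⁻ ω, f ω ^ 2 ∂μ := by
  have hpq : Real.HolderConjugate 2 2 := Real.HolderConjugate.two_two
  have h := ENNReal.lintegral_mul_le_Lp_mul_Lq μ hpq hf
    (aemeasurable_const (b := (1 : ℝ≥0∞)))
  simp only [Pi.mul_apply, mul_one, ENNReal.one_rpow, lintegral_const, measure_univ,
    one_mul, ENNReal.one_rpow] at h
  have h2 : (∫⁻ ω, f ω ∂μ) ^ (2:ℕ) ≤ ((∫⁻ a, f a ^ (2:ℝ) ∂μ) ^ (1/2 : ℝ)) ^ (2:ℕ) :=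
    pow_le_pow_left' h 2
  calc (∫⁻ ω, f ω ∂μ) ^ 2 ≤ ((∫⁻ a, f a ^ (2:ℝ) ∂μ) ^ (1/2 : ℝ)) ^ (2:ℕ) := h2
    _ = ∫⁻ a, f a ^ (2:ℝ) ∂μ := by
        rw [← ENNReal.rpow_natCast _ 2, ← ENNReal.rpow_mul]
        norm_num
    _ = ∫⁻ a, f a ^ 2 ∂μ := by
        refine lintegral_congr fun a => ?_
        rw [← ENNReal.rpow_natCast (f a) 2]
        norm_num

lemma acd_lintegral_tprod {Ω : Type*} [MeasurableSpace Ω] (μ : Measure Ω)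
    [IsProbabilityMeasure μ] (X : ℕ → Ω → ℝ≥0∞) (hX : ∀ j, Measurable (X j))
    (hind : iIndepFun X μ)
    (hone : ∀ j ω, 1 ≤ X (j + 1) ω) :
    ∫⁻ ω, X 0 ω * ∏' j, X (j + 1) ω ∂μ
      = (∫⁻ ω, X 0 ω ∂μ) * ∏' j, ∫⁻ ω, X (j + 1) ω ∂μ := by
  -- finite-product factorization
  have hfin : ∀ n, ∫⁻ ω, ∏ j ∈ Finset.range n, X j ω ∂μ
      = ∏ j ∈ Finset.range n, ∫⁻ ω, X j ω ∂μ := by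
    intro n
    induction n with
    | zero => simp
    | succ n ih =>
      have hIF : IndepFun (∏ j ∈ Finset.range n, X j) (X n) μ :=
        hind.indepFun_prod_range_succ hX n
      have hmp : Measurable (∏ j ∈ Finset.range n, X j) := by
        rw [Finset.prod_fn]
        exact Finset.measurable_prod _ fun i _ => hX i
      have hmul := lintegral_mul_eq_lintegral_mul_lintegral_of_indepFun
        (f := ∏ j ∈ Finset.range n, X j) (g := X n) hmp (hX n) hIF
      simp only [Pi.mul_apply, Finset.prod_apply] at hmul
      calc ∫⁻ ω, ∏ j ∈ Finset.range (n + 1), X j ω ∂μ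
          = ∫⁻ ω, (∏ j ∈ Finset.range n, X j ω) * X n ω ∂μ := by
            simp [Finset.prod_range_succ]
        _ = (∫⁻ ω, ∏ j ∈ Finset.range n, X j ω ∂μ) * ∫⁻ ω, X n ω ∂μ := hmul
        _ = (∏ j ∈ Finset.range n, ∫⁻ ω, X j ω ∂μ) * ∫⁻ ω, X n ω ∂μ := by rw [ih]
        _ = ∏ j ∈ Finset.range (n + 1), ∫⁻ ω, X j ω ∂μ := (Finset.prod_range_succ _ n).symm
  -- pointwise rewrite as a sup
  have hptw : ∀ ω, X 0 ω * ∏' j, X (j + 1) ω = ⨆ n, ∏ j ∈ Finset.range (n + 1), X j ω := by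
    intro ω
    rw [acd_tprod_eq_iSup _ (fun j => hone j ω), ENNReal.mul_iSup]
    refine iSup_congr fun n => ?_
    rw [Finset.prod_range_succ' (fun j => X j ω) n, mul_comm]
  rw [lintegral_congr hptw]
  have hmeasn : ∀ n, Measurable fun ω => ∏ j ∈ Finset.range (n + 1), X j ω := by
    intro n
    exact Finset.measurable_prod _ fun i _ => hX i
  have hmon : Monotone fun n ω => ∏ j ∈ Finset.range (n + 1), X j ω := by
    intro m n h ω
    refine Finset.prod_le_prod_of_subset_of_one_le'
      (Finset.range_subset_range.2 (Nat.succ_le_succ h)) fun i _ hi => ?_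
    match i with
    | 0 => exact absurd (Finset.mem_range.2 (Nat.succ_pos m)) hi
    | (k + 1) => exact hone k ω
  rw [lintegral_iSup hmeasn hmon]
  have h1le : ∀ j, (1 : ℝ≥0∞) ≤ ∫⁻ ω, X (j + 1) ω ∂μ := by
    intro j
    calc (1 : ℝ≥0∞) = ∫⁻ _, 1 ∂μ := by simp
      _ ≤ ∫⁻ ω, X (j + 1) ω ∂μ := lintegral_mono (hone j)
  calc ⨆ n, ∫⁻ ω, ∏ j ∈ Finset.range (n + 1), X j ω ∂μ
      = ⨆ n, ∏ j ∈ Finset.range (n + 1), ∫⁻ ω, X j ω ∂μ := by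
        exact iSup_congr fun n => hfin (n + 1)
    _ = ⨆ n, (∫⁻ ω, X 0 ω ∂μ) * ∏ j ∈ Finset.range n, ∫⁻ ω, X (j + 1) ω ∂μ := by
        refine iSup_congr fun n => ?_
        rw [Finset.prod_range_succ' (fun j => ∫⁻ ω, X j ω ∂μ) n, mul_comm]
    _ = (∫⁻ ω, X 0 ω ∂μ) * ⨆ n, ∏ j ∈ Finset.range n, ∫⁻ ω, X (j + 1) ω ∂μ := by
        rw [ENNReal.mul_iSup]
    _ = (∫⁻ ω, X 0 ω ∂μ) * ∏' j, ∫⁻ ω, X (j + 1) ω ∂μ := by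
        rw [acd_tprod_eq_iSup _ h1le]

lemma acd_arith (A B C P1 P2 : ℝ≥0∞) (hA0 : A ≠ 0) (hAt : A ≠ ⊤) (hC0 : C ≠ 0)
    (hCt : C ≠ ⊤) (hP0 : P1 ≠ 0) (hPt : P1 ≠ ⊤) :
    (C ^ 2 * (B * P2)) / (C * (A * P1)) ^ 2 = B / A ^ 2 * (P2 / P1 ^ 2) := by
  rw [div_eq_mul_inv, div_eq_mul_inv, div_eq_mul_inv, mul_pow, mul_pow,
    ENNReal.mul_inv (Or.inl (pow_ne_zero 2 hC0))
      (Or.inl (ENNReal.pow_ne_top hCt)),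
    ENNReal.mul_inv (Or.inl (pow_ne_zero 2 hA0))
      (Or.inl (ENNReal.pow_ne_top hAt))]
  calc C ^ 2 * (B * P2) * ((C ^ 2)⁻¹ * ((A ^ 2)⁻¹ * (P1 ^ 2)⁻¹))
      = C ^ 2 * (C ^ 2)⁻¹ * (B * (A ^ 2)⁻¹ * (P2 * (P1 ^ 2)⁻¹)) := by ring
    _ = B * (A ^ 2)⁻¹ * (P2 * (P1 ^ 2)⁻¹) := by
        rw [ENNReal.mul_inv_cancel (pow_ne_zero 2 hC0) (ENNReal.pow_ne_top hCt), one_mul]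
/-- Proposition 1, item 2: dispersion index inequality for the
skew-QBS ACD model: for iid nonnegative innovations ε_j with 0 < E[ε] < ∞ and
E[ε²] < ∞, and nonnegative coefficients θ_j whose moment products
P₁ = ∏_{j=1}^∞ E[e^{θ_j ε}] and P₂ = ∏_{j=1}^∞ E[e^{2θ_j ε}] are finite and positive,
the stationary duration Y = ε₀ e^c ∏_{j=1}^∞ e^{θ_j ε_j} satisfies
E[Y²]/(E[Y])² = (E[ε²]/(E[ε])²) · P₂/P₁² ≥ E[ε²]/(E[ε])², i.e. the dispersion index
of Y is at least that of the innovations. -/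
theorem acd_dispersion_index
    {Ω : Type*} [MeasurableSpace Ω] (μ : Measure Ω) [IsProbabilityMeasure μ]
    (ε : ℕ → Ω → ℝ) (hmeas : ∀ j, Measurable (ε j))
    (hnonneg : ∀ j ω, 0 ≤ ε j ω)
    (hindep : iIndepFun ε μ)
    (hident : ∀ j : ℕ, Measure.map (ε j) μ = Measure.map (ε 1) μ)
    (c : ℝ) (θ : ℕ → ℝ) (hθ : ∀ j, 0 ≤ θ j)
    (hE1pos : 0 < ∫⁻ ω, ENNReal.ofReal (ε 1 ω) ∂μ)
    (hE1fin : (∫⁻ ω, ENNReal.ofReal (ε 1 ω) ∂μ) < ⊤)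
    (hE2fin : (∫⁻ ω, ENNReal.ofReal (ε 1 ω ^ 2) ∂μ) < ⊤)
    (hP1pos : 0 < ∏' j : ℕ, ∫⁻ ω, ENNReal.ofReal (Real.exp (θ (j + 1) * ε (j + 1) ω)) ∂μ)
    (hP1fin : (∏' j : ℕ, ∫⁻ ω, ENNReal.ofReal (Real.exp (θ (j + 1) * ε (j + 1) ω)) ∂μ) < ⊤)
    (hP2pos : 0 < ∏' j : ℕ, ∫⁻ ω, ENNReal.ofReal (Real.exp (2 * θ (j + 1) * ε (j + 1) ω)) ∂μ)
    (hP2fin : (∏' j : ℕ, ∫⁻ ω, ENNReal.ofReal (Real.exp (2 * θ (j + 1) * ε (j + 1) ω)) ∂μ) < ⊤) :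
    (∫⁻ ω, (ENNReal.ofReal (ε 0 ω) * ENNReal.ofReal (Real.exp c) *
          ∏' j : ℕ, ENNReal.ofReal (Real.exp (θ (j + 1) * ε (j + 1) ω))) ^ 2 ∂μ) /
        (∫⁻ ω, ENNReal.ofReal (ε 0 ω) * ENNReal.ofReal (Real.exp c) *
          ∏' j : ℕ, ENNReal.ofReal (Real.exp (θ (j + 1) * ε (j + 1) ω)) ∂μ) ^ 2
      = ((∫⁻ ω, ENNReal.ofReal (ε 1 ω ^ 2) ∂μ) /
            (∫⁻ ω, ENNReal.ofReal (ε 1 ω) ∂μ) ^ 2) *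
          ((∏' j : ℕ, ∫⁻ ω, ENNReal.ofReal (Real.exp (2 * θ (j + 1) * ε (j + 1) ω)) ∂μ) /
            (∏' j : ℕ, ∫⁻ ω, ENNReal.ofReal (Real.exp (θ (j + 1) * ε (j + 1) ω)) ∂μ) ^ 2) ∧
    ((∫⁻ ω, ENNReal.ofReal (ε 1 ω ^ 2) ∂μ) / (∫⁻ ω, ENNReal.ofReal (ε 1 ω) ∂μ) ^ 2)
      ≤ (∫⁻ ω, (ENNReal.ofReal (ε 0 ω) * ENNReal.ofReal (Real.exp c) *
            ∏' j : ℕ, ENNReal.ofReal (Real.exp (θ (j + 1) * ε (j + 1) ω))) ^ 2 ∂μ) /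
          (∫⁻ ω, ENNReal.ofReal (ε 0 ω) * ENNReal.ofReal (Real.exp c) *
            ∏' j : ℕ, ENNReal.ofReal (Real.exp (θ (j + 1) * ε (j + 1) ω)) ∂μ) ^ 2 := by
  classical
  -- notation
  set C : ℝ≥0∞ := ENNReal.ofReal (Real.exp c) with hCdef
  set φ : ℕ → ℝ → ℝ≥0∞ := fun j x =>
    if j = 0 then ENNReal.ofReal x else ENNReal.ofReal (Real.exp (θ j * x)) with hφdef
  set φ2 : ℕ → ℝ → ℝ≥0∞ := fun j x =>
    if j = 0 then ENNReal.ofReal (x ^ 2)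
    else ENNReal.ofReal (Real.exp (2 * θ j * x)) with hφ2def
  have hφm : ∀ j, Measurable (φ j) := by
    intro j
    by_cases h : j = 0 <;> simp only [hφdef, h, if_true, if_false, reduceIte] <;> fun_prop
  have hφ2m : ∀ j, Measurable (φ2 j) := by
    intro j
    by_cases h : j = 0 <;> simp only [hφ2def, h, if_true, if_false, reduceIte] <;> fun_prop
  set X : ℕ → Ω → ℝ≥0∞ := fun j ω => φ j (ε j ω) with hXdef
  set X2 : ℕ → Ω → ℝ≥0∞ := fun j ω => φ2 j (ε j ω) with hX2def
  have hXm : ∀ j, Measurable (X j) := fun j => (hφm j).comp (hmeas j)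
  have hX2m : ∀ j, Measurable (X2 j) := fun j => (hφ2m j).comp (hmeas j)
  have hXind : iIndepFun X μ :=
    hindep.comp φ hφm
  have hX2ind : iIndepFun X2 μ :=
    hindep.comp φ2 hφ2m
  have hX0 : ∀ ω, X 0 ω = ENNReal.ofReal (ε 0 ω) := fun ω => by simp [hXdef, hφdef]
  have hXS : ∀ j ω, X (j + 1) ω = ENNReal.ofReal (Real.exp (θ (j + 1) * ε (j + 1) ω)) :=
    fun j ω => by simp [hXdef, hφdef]
  have hX20 : ∀ ω, X2 0 ω = ENNReal.ofReal (ε 0 ω ^ 2) := fun ω => by simp [hX2def, hφ2def]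
  have hX2S : ∀ j ω, X2 (j + 1) ω
      = ENNReal.ofReal (Real.exp (2 * θ (j + 1) * ε (j + 1) ω)) :=
    fun j ω => by simp [hX2def, hφ2def]
  have hXone : ∀ j ω, 1 ≤ X (j + 1) ω := by
    intro j ω
    rw [hXS]
    exact ENNReal.one_le_ofReal.mpr
      (Real.one_le_exp (mul_nonneg (hθ _) (hnonneg _ _)))
  have hX2one : ∀ j ω, 1 ≤ X2 (j + 1) ω := by
    intro j ω
    rw [hX2S]
    exact ENNReal.one_le_ofReal.mpr
      (Real.one_le_exp (mul_nonneg (mul_nonneg (by norm_num) (hθ _)) (hnonneg _ _)))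
  have hsq0 : ∀ ω, X2 0 ω = X 0 ω ^ 2 := by
    intro ω
    rw [hX20, hX0, ENNReal.ofReal_pow (hnonneg 0 ω)]
  have hsqS : ∀ j ω, X2 (j + 1) ω = X (j + 1) ω ^ 2 := by
    intro j ω
    rw [hX2S, hXS]
    have h2 : 2 * θ (j + 1) * ε (j + 1) ω
        = ((2 : ℕ) : ℝ) * (θ (j + 1) * ε (j + 1) ω) := by push_cast; ring
    rw [h2, Real.exp_nat_mul, ENNReal.ofReal_pow (Real.exp_nonneg _)]
  -- identical distribution transfer
  have hid : ∀ ψ : ℝ → ℝ≥0∞, Measurable ψ →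
      ∫⁻ ω, ψ (ε 0 ω) ∂μ = ∫⁻ ω, ψ (ε 1 ω) ∂μ := by
    intro ψ hψ
    rw [← lintegral_map hψ (hmeas 0), hident 0, lintegral_map hψ (hmeas 1)]
  have hIX0 : ∫⁻ ω, X 0 ω ∂μ = ∫⁻ ω, ENNReal.ofReal (ε 1 ω) ∂μ := by
    rw [lintegral_congr hX0]
    exact hid _ ENNReal.measurable_ofReal
  have hIX20 : ∫⁻ ω, X2 0 ω ∂μ = ∫⁻ ω, ENNReal.ofReal (ε 1 ω ^ 2) ∂μ := by
    rw [lintegral_congr hX20]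
    exact hid (fun x => ENNReal.ofReal (x ^ 2)) (by fun_prop)
  have hIXS : ∀ j, ∫⁻ ω, X (j + 1) ω ∂μ
      = ∫⁻ ω, ENNReal.ofReal (Real.exp (θ (j + 1) * ε (j + 1) ω)) ∂μ :=
    fun j => lintegral_congr (hXS j)
  have hIX2S : ∀ j, ∫⁻ ω, X2 (j + 1) ω ∂μ
      = ∫⁻ ω, ENNReal.ofReal (Real.exp (2 * θ (j + 1) * ε (j + 1) ω)) ∂μ :=
    fun j => lintegral_congr (hX2S j)
  -- first moment
  have hEY : (∫⁻ ω, ENNReal.ofReal (ε 0 ω) * C *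
        ∏' j : ℕ, ENNReal.ofReal (Real.exp (θ (j + 1) * ε (j + 1) ω)) ∂μ)
      = C * ((∫⁻ ω, ENNReal.ofReal (ε 1 ω) ∂μ) *
        ∏' j : ℕ, ∫⁻ ω, ENNReal.ofReal (Real.exp (θ (j + 1) * ε (j + 1) ω)) ∂μ) := by
    have hptw : ∀ ω, ENNReal.ofReal (ε 0 ω) * C *
        ∏' j : ℕ, ENNReal.ofReal (Real.exp (θ (j + 1) * ε (j + 1) ω))
        = C * (X 0 ω * ∏' j : ℕ, X (j + 1) ω) := by
      intro ω
      rw [hX0, tprod_congr fun j => (hXS j ω).symm]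
      ring
    rw [lintegral_congr hptw, lintegral_const_mul' _ _ ENNReal.ofReal_ne_top,
      acd_lintegral_tprod μ X hXm hXind hXone, hIX0,
      tprod_congr fun j => hIXS j]
  -- second moment
  have hEY2 : (∫⁻ ω, (ENNReal.ofReal (ε 0 ω) * C *
        ∏' j : ℕ, ENNReal.ofReal (Real.exp (θ (j + 1) * ε (j + 1) ω))) ^ 2 ∂μ)
      = C ^ 2 * ((∫⁻ ω, ENNReal.ofReal (ε 1 ω ^ 2) ∂μ) *
        ∏' j : ℕ, ∫⁻ ω, ENNReal.ofReal (Real.exp (2 * θ (j + 1) * ε (j + 1) ω)) ∂μ) := by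
    have hptw : ∀ ω, (ENNReal.ofReal (ε 0 ω) * C *
        ∏' j : ℕ, ENNReal.ofReal (Real.exp (θ (j + 1) * ε (j + 1) ω))) ^ 2
        = C ^ 2 * (X2 0 ω * ∏' j : ℕ, X2 (j + 1) ω) := by
      intro ω
      rw [tprod_congr fun j => (hXS j ω).symm, ← hX0 ω, mul_pow, mul_pow,
        acd_tprod_sq _ (fun j => hXone j ω), ← hsq0 ω,
        tprod_congr fun j => (hsqS j ω).symm]
      ring
    rw [lintegral_congr hptw,
      lintegral_const_mul' _ _ (ENNReal.pow_ne_top (by rw [hCdef]; exact ENNReal.ofReal_ne_top)),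
      acd_lintegral_tprod μ X2 hX2m hX2ind hX2one, hIX20,
      tprod_congr fun j => hIX2S j]
  -- positivity and finiteness facts
  have hA0 : (∫⁻ ω, ENNReal.ofReal (ε 1 ω) ∂μ) ≠ 0 := hE1pos.ne'
  have hAt : (∫⁻ ω, ENNReal.ofReal (ε 1 ω) ∂μ) ≠ ⊤ := hE1fin.ne
  have hC0 : C ≠ 0 := by
    rw [hCdef]
    exact (ENNReal.ofReal_pos.mpr (Real.exp_pos c)).ne'
  have hCt : C ≠ ⊤ := by rw [hCdef]; exact ENNReal.ofReal_ne_top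
  have hP10 : (∏' j : ℕ, ∫⁻ ω, ENNReal.ofReal (Real.exp (θ (j + 1) * ε (j + 1) ω)) ∂μ) ≠ 0 :=
    hP1pos.ne'
  have hP1t : (∏' j : ℕ, ∫⁻ ω, ENNReal.ofReal (Real.exp (θ (j + 1) * ε (j + 1) ω)) ∂μ) ≠ ⊤ :=
    hP1fin.ne
  -- Cauchy-Schwarz per factor
  have hQ1 : ∀ j, (1 : ℝ≥0∞) ≤ ∫⁻ ω, ENNReal.ofReal (Real.exp (θ (j + 1) * ε (j + 1) ω)) ∂μ := by
    intro j
    calc (1 : ℝ≥0∞) = ∫⁻ _, 1 ∂μ := by simp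
      _ ≤ _ := lintegral_mono fun ω => hXS j ω ▸ hXone j ω
  have hR1 : ∀ j, (1 : ℝ≥0∞)
      ≤ ∫⁻ ω, ENNReal.ofReal (Real.exp (2 * θ (j + 1) * ε (j + 1) ω)) ∂μ := by
    intro j
    calc (1 : ℝ≥0∞) = ∫⁻ _, 1 ∂μ := by simp
      _ ≤ _ := lintegral_mono fun ω => hX2S j ω ▸ hX2one j ω
  have hCS : ∀ j, (∫⁻ ω, ENNReal.ofReal (Real.exp (θ (j + 1) * ε (j + 1) ω)) ∂μ) ^ 2
      ≤ ∫⁻ ω, ENNReal.ofReal (Real.exp (2 * θ (j + 1) * ε (j + 1) ω)) ∂μ := by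
    intro j
    refine (acd_cs μ (f := fun ω => ENNReal.ofReal (Real.exp (θ (j + 1) * ε (j + 1) ω)))
      (by fun_prop)).trans_eq ?_
    refine lintegral_congr fun ω => ?_
    rw [← hXS j ω, ← hsqS j ω, hX2S j ω]
  have hP12 : (∏' j : ℕ, ∫⁻ ω, ENNReal.ofReal (Real.exp (θ (j + 1) * ε (j + 1) ω)) ∂μ) ^ 2
      ≤ ∏' j : ℕ, ∫⁻ ω, ENNReal.ofReal (Real.exp (2 * θ (j + 1) * ε (j + 1) ω)) ∂μ := by
    rw [acd_tprod_sq _ hQ1]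
    exact acd_tprod_le _ _ (fun j => one_le_pow_of_one_le' (hQ1 j) 2) hR1 hCS
  have honediv : (1 : ℝ≥0∞)
      ≤ (∏' j : ℕ, ∫⁻ ω, ENNReal.ofReal (Real.exp (2 * θ (j + 1) * ε (j + 1) ω)) ∂μ) /
        (∏' j : ℕ, ∫⁻ ω, ENNReal.ofReal (Real.exp (θ (j + 1) * ε (j + 1) ω)) ∂μ) ^ 2 :=
    (ENNReal.le_div_iff_mul_le (Or.inl (pow_ne_zero 2 hP10))
      (Or.inl (ENNReal.pow_ne_top hP1t))).mpr (by rw [one_mul]; exact hP12)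
  constructor
  · rw [hEY, hEY2, acd_arith _ _ _ _ _ hA0 hAt hC0 hCt hP10 hP1t]
  · rw [hEY, hEY2, acd_arith _ _ _ _ _ hA0 hAt hC0 hCt hP10 hP1t]
    exact le_mul_of_one_le_right' honediv
end
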